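/- Let f : ℝ^{n×p} → ℝ be differentiable, let β ∈ ℝ, and define h(Y) = f(𝒜(Y)) + (β/2)‖C(Y)‖². Let X ∈ 𝓕 and suppose the Frobenius gradient G := ∇f(𝒜(X)) belongs to 𝓕. Then h is differentiable at X and its Frobenius gradient is ∇h(X) = G((3/2)I_p − (1/2)Xᵀφ(X)) − (1/2)φ(X)(XᵀG + ψ(GᵀX)) + β φ(X)(φ(X)ᵀX + ψ(Xᵀφ(X)) − 2I_p); i.e. for every Z ∈ ℝ^{n×p}, the Fréchet derivative of h at X in direction Z equals the Frobenius inner product of this matrix with Z. -/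

import Mathlib

open Matrix

attribute [local instance] Matrix.frobeniusNormedAddCommGroup Matrix.frobeniusNormedSpace

/-- Frobenius inner product `⟨A, B⟩ = tr(AᵀB)`. -/
noncomputable def frobInner {n p : ℕ} (A B : Matrix (Fin n) (Fin p) ℝ) : ℝ :=
  (Aᵀ * B).trace

/-- The constraint map `C(X) = Xᵀ φ(X) − I_p`. -/
noncomputable def Cmap {n p : ℕ}
    (φ : Matrix (Fin n) (Fin p) ℝ →ₗ[ℝ] Matrix (Fin n) (Fin p) ℝ)
    (X : Matrix (Fin n) (Fin p) ℝ) : Matrix (Fin p) (Fin p) ℝ :=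
  Xᵀ * φ X - 1

/-- The constraint dissolving operator `𝒜(X) = (3/2)X − (1/2)X φ(X)ᵀ X`. -/
noncomputable def Amap {n p : ℕ}
    (φ : Matrix (Fin n) (Fin p) ℝ →ₗ[ℝ] Matrix (Fin n) (Fin p) ℝ)
    (X : Matrix (Fin n) (Fin p) ℝ) : Matrix (Fin n) (Fin p) ℝ :=
  (3/2 : ℝ) • X - (1/2 : ℝ) • (X * (φ X)ᵀ * X)

/-- `𝒢 = span{X₁ᵀ X₂ : X₁, X₂ ∈ 𝓕}`. -/
noncomputable def Gspan {n p : ℕ} (𝓕 : Submodule ℝ (Matrix (Fin n) (Fin p) ℝ)) :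
    Submodule ℝ (Matrix (Fin p) (Fin p) ℝ) :=
  Submodule.span ℝ {T | ∃ X₁ ∈ 𝓕, ∃ X₂ ∈ 𝓕, T = X₁ᵀ * X₂}

/- ### Auxiliary material -/

noncomputable def mulL {a b c : ℕ} :
    Matrix (Fin a) (Fin b) ℝ →L[ℝ] Matrix (Fin b) (Fin c) ℝ →L[ℝ] Matrix (Fin a) (Fin c) ℝ :=
  LinearMap.toContinuousLinearMap
    { toFun := fun A => LinearMap.toContinuousLinearMap
        { toFun := fun B => A * B
          map_add' := fun B B' => Matrix.mul_add A B B'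
          map_smul' := fun r B => (Matrix.mul_smul A r B) }
      map_add' := fun A A' => by ext B : 1; simp [Matrix.add_mul]
      map_smul' := fun r A => by ext B : 1; simp [Matrix.smul_mul] }

@[simp] lemma mulL_apply {a b c : ℕ} (A : Matrix (Fin a) (Fin b) ℝ) (B : Matrix (Fin b) (Fin c) ℝ) :
    mulL A B = A * B := rfl

noncomputable def transL (a b : ℕ) :
    Matrix (Fin a) (Fin b) ℝ →L[ℝ] Matrix (Fin b) (Fin a) ℝ :=
  LinearMap.toContinuousLinearMap
    { toFun := fun A => Aᵀ
      map_add' := fun A B => Matrix.transpose_add A B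
      map_smul' := fun r A => Matrix.transpose_smul r A }

@[simp] lemma transL_apply {a b : ℕ} (A : Matrix (Fin a) (Fin b) ℝ) : transL a b A = Aᵀ := rfl

theorem HasFDerivAt.matmul {E : Type*} [NormedAddCommGroup E] [NormedSpace ℝ E]
    {a b c : ℕ} {g : E → Matrix (Fin a) (Fin b) ℝ} {h : E → Matrix (Fin b) (Fin c) ℝ}
    {g' : E →L[ℝ] Matrix (Fin a) (Fin b) ℝ} {h' : E →L[ℝ] Matrix (Fin b) (Fin c) ℝ} {x : E}
    (hg : HasFDerivAt g g' x) (hh : HasFDerivAt h h' x) :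
    HasFDerivAt (fun y => g y * h y)
      (@HAdd.hAdd (E →L[ℝ] Matrix (Fin a) (Fin c) ℝ) (E →L[ℝ] Matrix (Fin a) (Fin c) ℝ) _ _
        ((mulL.flip (h x)).comp g') ((mulL (g x)).comp h')) x := by
  have := (mulL.isBoundedBilinearMap.hasFDerivAt (g x, h x)).comp x (hg.prodMk hh)
  refine this.congr_fderiv ?_
  ext z
  simp [IsBoundedBilinearMap.deriv_apply, add_comm]
  exact add_comm _ _

lemma frob_norm_sq {a b : ℕ} (A : Matrix (Fin a) (Fin b) ℝ) : ‖A‖ ^ 2 = (Aᵀ * A).trace := by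
  rw [Matrix.frobenius_norm_def]
  rw [← Real.rpow_natCast _ 2, ← Real.rpow_mul (by positivity)]
  norm_num
  rw [Matrix.trace]
  simp only [Matrix.diag, Matrix.mul_apply, Matrix.transpose_apply, Real.norm_eq_abs, sq_abs, sq]
  exact Finset.sum_comm

lemma frobInner_comm {a b : ℕ} (A B : Matrix (Fin a) (Fin b) ℝ) :
    frobInner A B = frobInner B A := by
  rw [frobInner, frobInner, ← Matrix.trace_transpose, Matrix.transpose_mul,
    Matrix.transpose_transpose]

@[simp] lemma frobInner_add_left {a b : ℕ} (A B C : Matrix (Fin a) (Fin b) ℝ) :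
    frobInner (A + B) C = frobInner A C + frobInner B C := by
  simp [frobInner, Matrix.transpose_add, Matrix.add_mul]

@[simp] lemma frobInner_sub_left {a b : ℕ} (A B C : Matrix (Fin a) (Fin b) ℝ) :
    frobInner (A - B) C = frobInner A C - frobInner B C := by
  simp [frobInner, Matrix.transpose_sub, Matrix.sub_mul]

@[simp] lemma frobInner_smul_left {a b : ℕ} (r : ℝ) (A C : Matrix (Fin a) (Fin b) ℝ) :
    frobInner (r • A) C = r * frobInner A C := by
  simp [frobInner, Matrix.transpose_smul, Matrix.smul_mul]

@[simp] lemma frobInner_add_right {a b : ℕ} (A B C : Matrix (Fin a) (Fin b) ℝ) :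
    frobInner C (A + B) = frobInner C A + frobInner C B := by
  simp [frobInner, Matrix.mul_add]

@[simp] lemma frobInner_sub_right {a b : ℕ} (A B C : Matrix (Fin a) (Fin b) ℝ) :
    frobInner C (A - B) = frobInner C A - frobInner C B := by
  simp [frobInner, Matrix.mul_sub]

@[simp] lemma frobInner_smul_right {a b : ℕ} (r : ℝ) (A C : Matrix (Fin a) (Fin b) ℝ) :
    frobInner C (r • A) = r * frobInner C A := by
  simp [frobInner, Matrix.mul_smul]

/-- cyclic trace shuffle: `⟨G, Z * T⟩ = ⟨G * Tᵀ, Z⟩` for `T : p×p`. -/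
lemma frob_mul_right {n p : ℕ} (Gm Z : Matrix (Fin n) (Fin p) ℝ)
    (T : Matrix (Fin p) (Fin p) ℝ) :
    frobInner Gm (Z * T) = frobInner (Gm * Tᵀ) Z := by
  rw [frobInner, frobInner, Matrix.transpose_mul, Matrix.transpose_transpose]
  conv_lhs => rw [Matrix.trace_mul_comm, Matrix.mul_assoc, Matrix.trace_mul_comm]

/-- `⟨G, W * Z⟩ = ⟨Wᵀ * G, Z⟩` for `W : n×n`. -/
lemma frob_mul_left {n p : ℕ} (Gm Z : Matrix (Fin n) (Fin p) ℝ)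
    (W : Matrix (Fin n) (Fin n) ℝ) :
    frobInner Gm (W * Z) = frobInner (Wᵀ * Gm) Z := by
  rw [frobInner, frobInner, Matrix.transpose_mul, Matrix.transpose_transpose,
    ← Matrix.mul_assoc]

lemma trace_cyc3 {a b c : ℕ} (A : Matrix (Fin a) (Fin b) ℝ) (B : Matrix (Fin b) (Fin c) ℝ)
    (C : Matrix (Fin c) (Fin a) ℝ) : (A * B * C).trace = (B * C * A).trace := by
  rw [Matrix.mul_assoc, Matrix.trace_mul_comm, Matrix.mul_assoc]

theorem stmt_17 {n p : ℕ} (hn : 0 < n) (hp : 0 < p)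
    (φ : Matrix (Fin n) (Fin p) ℝ →ₗ[ℝ] Matrix (Fin n) (Fin p) ℝ)
    (𝓕 : Submodule ℝ (Matrix (Fin n) (Fin p) ℝ))
    (ψ : Matrix (Fin p) (Fin p) ℝ →ₗ[ℝ] Matrix (Fin p) (Fin p) ℝ)
    (hφ𝓕 : ∀ X ∈ 𝓕, φ X ∈ 𝓕)
    (hXT : ∀ X ∈ 𝓕, ∀ T ∈ Gspan 𝓕, X * T ∈ 𝓕)
    (hφsa : ∀ A B : Matrix (Fin n) (Fin p) ℝ, frobInner (φ A) B = frobInner A (φ B))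
    (hψG : ∀ T ∈ Gspan 𝓕, ψ T ∈ Gspan 𝓕)
    (hφψ : ∀ X ∈ 𝓕, ∀ T ∈ Gspan 𝓕, φ (X * T) = φ X * ψ T)
    (hψφ : ∀ X ∈ 𝓕, ψ ((φ X)ᵀ * X) = Xᵀ * φ X)
    (f : Matrix (Fin n) (Fin p) ℝ → ℝ) (hf : Differentiable ℝ f)
    (β : ℝ)
    (X : Matrix (Fin n) (Fin p) ℝ) (hX : X ∈ 𝓕)
    (G : Matrix (Fin n) (Fin p) ℝ) (hG𝓕 : G ∈ 𝓕)
    (hG : ∀ Z : Matrix (Fin n) (Fin p) ℝ, fderiv ℝ f (Amap φ X) Z = frobInner G Z) :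
    ∃ D : Matrix (Fin n) (Fin p) ℝ →L[ℝ] ℝ,
      HasFDerivAt (fun Y => f (Amap φ Y) + (β / 2) * ‖Cmap φ Y‖ ^ 2) D X ∧
      ∀ Z : Matrix (Fin n) (Fin p) ℝ,
        D Z = frobInner
          (G * ((3/2 : ℝ) • (1 : Matrix (Fin p) (Fin p) ℝ) - (1/2 : ℝ) • (Xᵀ * φ X))
            - (1/2 : ℝ) • (φ X * (Xᵀ * G + ψ (Gᵀ * X)))
            + β • (φ X * ((φ X)ᵀ * X + ψ (Xᵀ * φ X) - 2))) Z := by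
  classical
  set φL : Matrix (Fin n) (Fin p) ℝ →L[ℝ] Matrix (Fin n) (Fin p) ℝ := LinearMap.toContinuousLinearMap φ with hφL
  have hφd : HasFDerivAt (fun Y : Matrix (Fin n) (Fin p) ℝ => φ Y) φL X := by
    exact φL.hasFDerivAt (x := X)
  have hid : HasFDerivAt (fun Y : Matrix (Fin n) (Fin p) ℝ => Y) (ContinuousLinearMap.id ℝ (Matrix (Fin n) (Fin p) ℝ)) X := hasFDerivAt_id X
  -- derivative of Y ↦ (φ Y)ᵀ
  have hφt : HasFDerivAt (fun Y : Matrix (Fin n) (Fin p) ℝ => (φ Y)ᵀ) ((transL n p).comp φL) X :=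
    ((transL n p).hasFDerivAt).comp X hφd
  -- derivative of Y ↦ Yᵀ
  have ht : HasFDerivAt (fun Y : Matrix (Fin n) (Fin p) ℝ => Yᵀ) (transL n p) X := (transL n p).hasFDerivAt
  -- A-map derivative
  have h2 := hid.matmul hφt
  have h3 := h2.matmul hid
  set A' := ((3/2 : ℝ) • (ContinuousLinearMap.id ℝ (Matrix (Fin n) (Fin p) ℝ)) - (1/2 : ℝ) •
      (@HAdd.hAdd (Matrix (Fin n) (Fin p) ℝ →L[ℝ] Matrix (Fin n) (Fin p) ℝ) (Matrix (Fin n) (Fin p) ℝ →L[ℝ] Matrix (Fin n) (Fin p) ℝ) _ _ ((mulL.flip X).comp (@HAdd.hAdd (Matrix (Fin n) (Fin p) ℝ →L[ℝ] Matrix (Fin n) (Fin n) ℝ) (Matrix (Fin n) (Fin p) ℝ →L[ℝ] Matrix (Fin n) (Fin n) ℝ) _ _ ((mulL.flip (φ X)ᵀ).comp (ContinuousLinearMap.id ℝ (Matrix (Fin n) (Fin p) ℝ)))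
        ((mulL X).comp ((transL n p).comp φL))))
        ((mulL (X * (φ X)ᵀ)).comp (ContinuousLinearMap.id ℝ (Matrix (Fin n) (Fin p) ℝ))))) with hA'def
  have hA : HasFDerivAt (fun Y : Matrix (Fin n) (Fin p) ℝ => Amap φ Y) A' X := by
    have := (hid.const_smul (3/2 : ℝ)).sub (h3.const_smul (1/2 : ℝ))
    exact this
  -- C-map derivative
  set C' := (@HAdd.hAdd (Matrix (Fin n) (Fin p) ℝ →L[ℝ] Matrix (Fin p) (Fin p) ℝ) (Matrix (Fin n) (Fin p) ℝ →L[ℝ] Matrix (Fin p) (Fin p) ℝ) _ _ ((mulL.flip (φ X)).comp (transL n p)) ((mulL Xᵀ).comp φL)) with hC'def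
  have hC : HasFDerivAt (fun Y : Matrix (Fin n) (Fin p) ℝ => Cmap φ Y) C' X := by
    have := (ht.matmul hφd).sub_const (1 : Matrix (Fin p) (Fin p) ℝ)
    exact this
  -- squared norm derivative
  set traceCLM : Matrix (Fin p) (Fin p) ℝ →L[ℝ] ℝ :=
    LinearMap.toContinuousLinearMap (Matrix.traceLinearMap (Fin p) ℝ ℝ) with htr
  have hCt : HasFDerivAt (fun Y : Matrix (Fin n) (Fin p) ℝ => (Cmap φ Y)ᵀ) ((transL p p).comp C') X :=
    ((transL p p).hasFDerivAt).comp X hC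
  have hq : HasFDerivAt (fun Y : Matrix (Fin n) (Fin p) ℝ => ((Cmap φ Y)ᵀ * Cmap φ Y).trace)
      (traceCLM.comp (@HAdd.hAdd (Matrix (Fin n) (Fin p) ℝ →L[ℝ] Matrix (Fin p) (Fin p) ℝ) (Matrix (Fin n) (Fin p) ℝ →L[ℝ] Matrix (Fin p) (Fin p) ℝ) _ _ ((mulL.flip (Cmap φ X)).comp ((transL p p).comp C'))
        ((mulL (Cmap φ X)ᵀ).comp C'))) X :=
    (traceCLM.hasFDerivAt).comp X (hCt.matmul hC)
  -- f ∘ A derivative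
  have hfA : HasFDerivAt (fun Y : Matrix (Fin n) (Fin p) ℝ => f (Amap φ Y))
      ((fderiv ℝ f (Amap φ X)).comp A') X :=
    ((hf (Amap φ X)).hasFDerivAt).comp X hA
  refine ⟨(fderiv ℝ f (Amap φ X)).comp A' + (β / 2) • (traceCLM.comp
      (@HAdd.hAdd (Matrix (Fin n) (Fin p) ℝ →L[ℝ] Matrix (Fin p) (Fin p) ℝ) (Matrix (Fin n) (Fin p) ℝ →L[ℝ] Matrix (Fin p) (Fin p) ℝ) _ _ ((mulL.flip (Cmap φ X)).comp ((transL p p).comp C')) ((mulL (Cmap φ X)ᵀ).comp C'))), ?_, ?_⟩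
  · have heq : (fun Y : Matrix (Fin n) (Fin p) ℝ => f (Amap φ Y) + (β / 2) * ‖Cmap φ Y‖ ^ 2)
        = fun Y : Matrix (Fin n) (Fin p) ℝ => f (Amap φ Y) + (β / 2) * ((Cmap φ Y)ᵀ * Cmap φ Y).trace := by
      funext Y; rw [frob_norm_sq]
    rw [heq]
    exact hfA.add (hq.const_mul (β / 2))
  · intro Z
    -- memberships
    have hGX : Gᵀ * X ∈ Gspan 𝓕 := Submodule.subset_span ⟨G, hG𝓕, X, hX, rfl⟩
    have hXφX : Xᵀ * φ X ∈ Gspan 𝓕 := Submodule.subset_span ⟨X, hX, φ X, hφ𝓕 X hX, rfl⟩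
    -- evaluate D Z
    have hDZ : ((fderiv ℝ f (Amap φ X)).comp A' + (β / 2) • (traceCLM.comp
        (@HAdd.hAdd (Matrix (Fin n) (Fin p) ℝ →L[ℝ] Matrix (Fin p) (Fin p) ℝ) (Matrix (Fin n) (Fin p) ℝ →L[ℝ] Matrix (Fin p) (Fin p) ℝ) _ _ ((mulL.flip (Cmap φ X)).comp ((transL p p).comp C')) ((mulL (Cmap φ X)ᵀ).comp C')))) Z
        = 3 / 2 * frobInner G Z -
            (2⁻¹ * frobInner G (Z * (φ X)ᵀ * X) + 2⁻¹ * frobInner G (X * (φ Z)ᵀ * X) +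
              2⁻¹ * frobInner G (X * (φ X)ᵀ * Z)) +
          (β / 2 * ((φ X)ᵀ * Z * Cmap φ X).trace + β / 2 * ((φ Z)ᵀ * X * Cmap φ X).trace +
            (β / 2 * ((Cmap φ X)ᵀ * (Zᵀ * φ X)).trace
              + β / 2 * ((Cmap φ X)ᵀ * (Xᵀ * φ Z)).trace)) := by
      have hDZ0 : ((fderiv ℝ f (Amap φ X)).comp A' + (β / 2) • (traceCLM.comp
          (@HAdd.hAdd (Matrix (Fin n) (Fin p) ℝ →L[ℝ] Matrix (Fin p) (Fin p) ℝ) (Matrix (Fin n) (Fin p) ℝ →L[ℝ] Matrix (Fin p) (Fin p) ℝ) _ _ ((mulL.flip (Cmap φ X)).comp ((transL p p).comp C')) ((mulL (Cmap φ X)ᵀ).comp C')))) Z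
          = fderiv ℝ f (Amap φ X) ((3/2 : ℝ) • Z - (1/2 : ℝ) • ((Z * (φ X)ᵀ + X * (φ Z)ᵀ) * X + X * (φ X)ᵀ * Z))
            + β / 2 * ((Zᵀ * φ X + Xᵀ * φ Z)ᵀ * Cmap φ X + (Cmap φ X)ᵀ * (Zᵀ * φ X + Xᵀ * φ Z)).trace := rfl
      rw [hDZ0]
      simp [hA'def, hC'def, htr, hG, hφL, LinearMap.coe_toContinuousLinearMap',
        Matrix.add_mul, Matrix.mul_add]
      try ring
    rw [hDZ]
    have ht1 : ((φ X)ᵀ * Z * Cmap φ X).trace = frobInner (Cmap φ X) (Zᵀ * φ X) := by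
      rw [frobInner]
      conv_lhs => rw [← Matrix.trace_transpose]
      simp only [Matrix.transpose_mul, Matrix.transpose_transpose]
    have ht2 : ((φ Z)ᵀ * X * Cmap φ X).trace = frobInner (Cmap φ X) (Xᵀ * φ Z) := by
      rw [frobInner]
      conv_lhs => rw [← Matrix.trace_transpose]
      simp only [Matrix.transpose_mul, Matrix.transpose_transpose]
    have ht3 : ((Cmap φ X)ᵀ * (Zᵀ * φ X)).trace = frobInner (Cmap φ X) (Zᵀ * φ X) := rfl
    have ht4 : ((Cmap φ X)ᵀ * (Xᵀ * φ Z)).trace = frobInner (Cmap φ X) (Xᵀ * φ Z) := rfl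
    rw [ht1, ht2, ht3, ht4]
    -- key adjoint identities
    have L1 : frobInner G (Z * (φ X)ᵀ * X) = frobInner (G * (Xᵀ * φ X)) Z := by
      rw [Matrix.mul_assoc, frob_mul_right, Matrix.transpose_mul, Matrix.transpose_transpose]
    have L2 : frobInner G (X * (φ Z)ᵀ * X) = frobInner (φ X * ψ (Gᵀ * X)) Z := by
      have e1 : frobInner G (X * (φ Z)ᵀ * X) = frobInner (φ Z) (X * (Gᵀ * X)) := by
        rw [frobInner, frobInner]
        conv_lhs => rw [← Matrix.mul_assoc, ← Matrix.mul_assoc]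
        rw [trace_cyc3 (Gᵀ * X) ((φ Z)ᵀ) X]
        conv_rhs => rw [← Matrix.mul_assoc]
      rw [e1, hφsa, ← hφψ X hX _ hGX]
      rw [frobInner_comm]
    have L3 : frobInner G (X * (φ X)ᵀ * Z) = frobInner (φ X * (Xᵀ * G)) Z := by
      rw [frob_mul_left, Matrix.transpose_mul, Matrix.transpose_transpose, Matrix.mul_assoc]
    have L4 : frobInner (Cmap φ X) (Zᵀ * φ X)
        = frobInner (φ X * ((φ X)ᵀ * X)) Z - frobInner (φ X) Z := by
      have e1 : frobInner (Cmap φ X) (Zᵀ * φ X) = frobInner (φ X * (Cmap φ X)ᵀ) Z := by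
        rw [frobInner, frobInner, Matrix.transpose_mul, Matrix.transpose_transpose]
        conv_lhs => rw [← Matrix.trace_transpose, Matrix.transpose_mul, Matrix.transpose_mul,
          Matrix.transpose_transpose, Matrix.transpose_transpose]
        rw [trace_cyc3 (Cmap φ X) (φ X)ᵀ Z]
      rw [e1, Cmap, Matrix.transpose_sub, Matrix.transpose_mul, Matrix.transpose_one,
        Matrix.transpose_transpose, Matrix.mul_sub, Matrix.mul_one, frobInner_sub_left]
    have L5 : frobInner (Cmap φ X) (Xᵀ * φ Z)
        = frobInner (φ X * ψ (Xᵀ * φ X)) Z - frobInner (φ X) Z := by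
      have e1 : frobInner (Cmap φ X) (Xᵀ * φ Z) = frobInner (φ (X * Cmap φ X)) Z := by
        rw [hφsa]
        rw [frobInner, frobInner, Matrix.transpose_mul, Matrix.mul_assoc]
      rw [e1, Cmap, Matrix.mul_sub, Matrix.mul_one, map_sub, frobInner_sub_left,
        hφψ X hX _ hXφX]
    -- expand and finish
    have h2m : (2 : Matrix (Fin p) (Fin p) ℝ) = (2 : ℝ) • 1 := by
      rw [two_smul]; exact (one_add_one_eq_two).symm
    rw [h2m]
    simp only [frobInner_add_left, frobInner_sub_left, frobInner_smul_left,
      frobInner_add_right, frobInner_sub_right, frobInner_smul_right,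
      Matrix.add_mul, Matrix.mul_add, Matrix.mul_sub, Matrix.mul_smul, Matrix.mul_one]
    rw [L1, L2, L3, L4, L5]
    ring
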